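/- Let K be a field of characteristic zero and let f = a/b ∈ K(x) be a nonzero proper rational function with gcd(a,b)=1 and b nonconstant. If f is rationally summable, then the polar dispersion of f is positive; that is, there exists ℓ ∈ ℕ, ℓ ≥ 1, with gcd(b(x), b(x+ℓ)) nonconstant. -/

import Mathlib

open Polynomial

/-- The shift `f(x) ↦ f(x+1)` on rational functions. -/
noncomputable def shift {K : Type*} [Field K] (f : RatFunc K) : RatFunc K :=
  RatFunc.mk (f.num.comp (Polynomial.X + 1)) (f.denom.comp (Polynomial.X + 1))

/-- Abramov: a nonzero proper rational function that is rationally summable has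
positive polar dispersion: some `ℓ ≥ 1` has `gcd(b(x), b(x+ℓ))` nonconstant. -/
theorem summable_implies_positive_dispersion {K : Type*} [Field K] [CharZero K] [DecidableEq K]
    (a b : Polynomial K) (ha : a ≠ 0) (hprop : a.degree < b.degree)
    (hcop : IsCoprime a b) (hb : 0 < b.degree)
    (hsum : ∃ g : RatFunc K,
      algebraMap (Polynomial K) (RatFunc K) a / algebraMap (Polynomial K) (RatFunc K) b =
        shift g - g) :
    ∃ ℓ : ℕ, 1 ≤ ℓ ∧
      0 < (gcd b (b.comp (Polynomial.X + Polynomial.C (ℓ : K)))).degree := by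
  classical
  by_contra hcon
  push_neg at hcon
  obtain ⟨g, hg⟩ := hsum
  have hb0 : b ≠ 0 := fun h => by simp [h] at hb
  set c : Polynomial K := g.num with hc
  set d : Polynomial K := g.denom with hd
  have hd0 : d ≠ 0 := g.denom_ne_zero
  -- composition with X+1 preserves nonzero-ness
  have hcomp_ne : ∀ p : Polynomial K, p ≠ 0 → p.comp (X + 1) ≠ 0 := by
    intro p hp h
    apply hp
    apply taylor_injective (1 : K)
    rw [taylor_apply, taylor_apply]
    simpa using h
  have hd'0 : d.comp (X + 1) ≠ 0 := hcomp_ne d hd0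
  -- the master polynomial identity over K
  have E : a * (d.comp (X + 1) * d) =
      b * (c.comp (X + 1) * d - c * d.comp (X + 1)) := by
    apply IsFractionRing.injective (Polynomial K) (RatFunc K)
    have hB : algebraMap (Polynomial K) (RatFunc K) b ≠ 0 := RatFunc.algebraMap_ne_zero hb0
    have hD : algebraMap (Polynomial K) (RatFunc K) d ≠ 0 := RatFunc.algebraMap_ne_zero hd0
    have hD' : algebraMap (Polynomial K) (RatFunc K) (d.comp (X + 1)) ≠ 0 :=
      RatFunc.algebraMap_ne_zero hd'0
    rw [shift, RatFunc.mk_eq_div, ← hc, ← hd, ← RatFunc.num_div_denom g, ← hc, ← hd] at hg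
    field_simp at hg
    push_cast [map_mul, map_sub]
    linear_combination hg
  -- move to the algebraic closure
  set F := AlgebraicClosure K with hF
  set φ : K →+* F := algebraMap K F with hφ
  set A : Polynomial F := a.map φ with hA
  set B : Polynomial F := b.map φ with hB
  set C' : Polynomial F := c.map φ with hC'
  set D : Polynomial F := d.map φ with hD
  have hB0 : B ≠ 0 := by
    simpa [hB, Polynomial.map_eq_zero] using hb0
  have hD0 : D ≠ 0 := by
    simpa [hD, Polynomial.map_eq_zero] using hd0
  have EF : A * (D.comp (X + 1) * D) =
      B * (C'.comp (X + 1) * D - C' * D.comp (X + 1)) := by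
    have := congrArg (Polynomial.map φ) E
    simpa [Polynomial.map_comp, hA, hB, hC', hD] using this
  have hcopF : IsCoprime A B := by
    rw [hA, hB]; exact (isCoprime_map φ).mpr hcop
  have hcdF : IsCoprime C' D := by
    rw [hC', hD]; exact (isCoprime_map φ).mpr (RatFunc.isCoprime_num_denom g)
  -- B has a root
  have hBdeg : B.degree = b.degree := by rw [hB]; exact degree_map b φ
  obtain ⟨α, hα⟩ : ∃ x, B.IsRoot x := by
    apply IsAlgClosed.exists_root
    rw [hBdeg]; exact fun h => by simp [h] at hb
  have hα : B.eval α = 0 := hα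
  -- no two roots of B in the orbit α + ℤ other than α itself
  have key : ∀ (x : F) (ℓ : ℕ), 1 ≤ ℓ → B.eval x = 0 → B.eval (x + ℓ) = 0 → False := by
    intro x ℓ hℓ h1 h2
    have hg0 := hcon ℓ hℓ
    have hcop' : IsCoprime b (b.comp (X + Polynomial.C (ℓ : K))) := by
      rw [← gcd_isUnit_iff]
      rw [Polynomial.isUnit_iff_degree_eq_zero]
      refine le_antisymm hg0 ?_
      rw [zero_le_degree_iff]
      exact gcd_ne_zero_of_left hb0
    have hcopF' : IsCoprime B (B.comp (X + Polynomial.C (ℓ : F))) := by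
      have := (isCoprime_map φ).mpr hcop'
      simpa [Polynomial.map_comp, hB, map_natCast, Polynomial.C_eq_natCast] using this
    obtain ⟨u, v, huv⟩ := hcopF'
    have := congrArg (Polynomial.eval x) huv
    simp [eval_comp, h1, h2] at this
  have noBoth : ∀ n : ℤ, B.eval (α + (n : F)) = 0 → n = 0 := by
    intro n hn
    by_contra h0
    rcases lt_or_gt_of_ne h0 with hneg | hpos
    · refine key (α + (n : F)) (-n).toNat (by omega) hn ?_
      have : ((((-n).toNat : ℕ) : F)) = -(n : F) := by
        rw [← Int.cast_natCast, Int.toNat_of_nonneg (by omega : (0:ℤ) ≤ -n)]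
        push_cast; ring
      rw [this, add_neg_cancel_right]; exact hα
    · refine key α n.toNat (by omega) hα ?_
      have : (((n.toNat : ℕ) : F)) = (n : F) := by
        rw [← Int.cast_natCast, Int.toNat_of_nonneg (by omega : (0:ℤ) ≤ n)]
      rw [this]; exact hn
  -- C' and D cannot vanish simultaneously
  have hCD : ∀ x : F, D.eval x = 0 → C'.eval x ≠ 0 := by
    intro x hx hcx
    obtain ⟨u, v, huv⟩ := hcdF
    have := congrArg (Polynomial.eval x) huv
    simp [hx, hcx] at this
  have hAB : ∀ x : F, B.eval x = 0 → A.eval x ≠ 0 := by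
    intro x hx hax
    obtain ⟨u, v, huv⟩ := hcopF
    have := congrArg (Polynomial.eval x) huv
    simp [hx, hax] at this
  -- evaluation of the master identity
  have evalEF : ∀ x : F, A.eval x * (D.eval (x + 1) * D.eval x) =
      B.eval x * (C'.eval (x + 1) * D.eval x - C'.eval x * D.eval (x + 1)) := by
    intro x
    have := congrArg (Polynomial.eval x) EF
    simpa [eval_comp] using this
  -- the set of integer shifts where D vanishes
  set S : Set ℤ := {n : ℤ | D.eval (α + (n : F)) = 0} with hS
  have hSfin : S.Finite := by
    have hinj : Set.InjOn (fun n : ℤ => α + (n : F)) S := by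
      intro x _ y _ h
      have : (x : F) = (y : F) := by
        have := add_left_cancel h
        exact this
      exact_mod_cast this
    apply Set.Finite.of_finite_image ?_ hinj
    apply Set.Finite.subset (Polynomial.finite_setOf_isRoot hD0)
    rintro - ⟨n, hn, rfl⟩
    exact hn
  have hSne : S.Nonempty := by
    have h := evalEF α
    rw [hα, zero_mul] at h
    rcases mul_eq_zero.mp h with h1 | h2
    · exact absurd h1 (hAB α hα)
    rcases mul_eq_zero.mp h2 with h3 | h4
    · refine ⟨1, ?_⟩
      rw [hS]; simp only [Set.mem_setOf_eq, Int.cast_one]; exact h3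
    · refine ⟨0, ?_⟩
      rw [hS]; simp only [Set.mem_setOf_eq, Int.cast_zero, add_zero]; exact h4
  set T : Finset ℤ := hSfin.toFinset with hT
  have hTne : T.Nonempty := by rwa [hT, Set.Finite.toFinset_nonempty]
  set m : ℤ := T.min' hTne with hm
  set M : ℤ := T.max' hTne with hMdef
  have hmem : ∀ n : ℤ, n ∈ T ↔ D.eval (α + (n : F)) = 0 := by
    intro n; rw [hT, Set.Finite.mem_toFinset]; rfl
  have hmS : D.eval (α + (m : F)) = 0 := (hmem m).mp (T.min'_mem hTne)
  have hMS : D.eval (α + (M : F)) = 0 := (hmem M).mp (T.max'_mem hTne)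
  have hm1 : D.eval (α + ((m - 1 : ℤ) : F)) ≠ 0 := by
    intro h
    have : m - 1 ∈ T := (hmem _).mpr h
    have := T.min'_le _ this
    omega
  have hM1 : D.eval (α + ((M + 1 : ℤ) : F)) ≠ 0 := by
    intro h
    have : M + 1 ∈ T := (hmem _).mpr h
    have := T.le_max' _ this
    omega
  -- B vanishes at α + M
  have hBM : B.eval (α + (M : F)) = 0 := by
    have h := evalEF (α + (M : F))
    have e1 : α + (M : F) + 1 = α + ((M + 1 : ℤ) : F) := by push_cast; ring
    rw [e1, hMS] at h
    simp only [mul_zero, zero_sub, mul_neg] at h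
    have h' : B.eval (α + (M : F)) * (C'.eval (α + (M : F)) * D.eval (α + ((M + 1 : ℤ) : F))) = 0 :=
      neg_eq_zero.mp (by rw [← mul_neg]; exact h.symm)
    rcases mul_eq_zero.mp h' with h1 | h2
    · exact h1
    rcases mul_eq_zero.mp h2 with h3 | h4
    · exact absurd h3 (hCD _ hMS)
    · exact absurd h4 hM1
  -- B vanishes at α + (m - 1)
  have hBm : B.eval (α + ((m - 1 : ℤ) : F)) = 0 := by
    have h := evalEF (α + ((m - 1 : ℤ) : F))
    have e1 : α + ((m - 1 : ℤ) : F) + 1 = α + (m : F) := by push_cast; ring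
    rw [e1, hmS] at h
    simp only [zero_mul, mul_zero, sub_zero] at h
    rcases mul_eq_zero.mp h.symm with h1 | h2
    · exact h1
    rcases mul_eq_zero.mp h2 with h3 | h4
    · exact absurd h3 (hCD _ hmS)
    · exact absurd h4 hm1
  have hM0 : M = 0 := noBoth M hBM
  have hm0 : m - 1 = 0 := noBoth (m - 1) hBm
  have : m ≤ M := T.min'_le _ (T.max'_mem hTne)
  omega
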